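/- For every integer k ≥ 1, there exists an 11 × (2k+1) matrix A whose entries form a bijection with the set {1, 2, …, 22k+11} such that: (i) in every column the sum of the entries in rows 1 through 5 equals 25k+15; (ii) in every column the sum of the entries in rows 1, 6, 7, 8 equals 50k+27, and the sum of the entries in rows 2, 9, 10, 11 equals 50k+27; and (iii) for each a ∈ {1, 2, 3}, the sum of all entries in rows 2+a, 5+a, and 8+a (over all 2k+1 columns) equals (2k+1)(39k+21). -/

import Mathlib

namespace LocalAntimagic

/-- Skolem-type permutation of `{0,…,2k}`. -/
def pf (k j : ℕ) : ℕ := if j % 2 = 0 then k - j / 2 else 2 * k - j / 2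

/-- Companion permutation with `pf k j + qf k j = 3k - j`. -/
def qf (k j : ℕ) : ℕ := if j % 2 = 0 then 2 * k - j / 2 else k - 1 - j / 2

/-- Inverse of `pf k`. -/
def pinv (k v : ℕ) : ℕ := if v ≤ k then 2 * (k - v) else 2 * (2 * k - v) + 1

/-- Inverse of `qf k`. -/
def qinv (k v : ℕ) : ℕ := if k ≤ v then 2 * (2 * k - v) else 2 * (k - 1 - v) + 1

/-- The matrix, rows indexed by naturals. -/
def M (k : ℕ) : ℕ → ℕ → ℕ
  | 0, j => j + 1
  | 1, j => 4 * k + 2 - j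
  | 2, j => 4 * k + 3 + j
  | 3, j => 6 * k + 4 + pf k j
  | 4, j => 8 * k + 5 + qf k j
  | 5, j => 22 * k + 11 - j
  | 6, j => 18 * k + 9 - j
  | 7, j => 10 * k + 6 + j
  | 8, j => 12 * k + 7 + j
  | 9, j => 14 * k + 8 + j
  | 10, j => 20 * k + 10 - j
  | _, _ => 0

lemma pf_le (k j : ℕ) : pf k j ≤ 2 * k := by unfold pf; split_ifs <;> omega

lemma qf_le (k j : ℕ) : qf k j ≤ 2 * k := by unfold qf; split_ifs <;> omega

lemma pf_inj {k j j' : ℕ} (hj : j ≤ 2 * k) (hj' : j' ≤ 2 * k)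
    (h : pf k j = pf k j') : j = j' := by
  unfold pf at h; split_ifs at h <;> omega

lemma qf_inj {k j j' : ℕ} (hj : j ≤ 2 * k) (hj' : j' ≤ 2 * k)
    (h : qf k j = qf k j') : j = j' := by
  unfold qf at h; split_ifs at h <;> omega

lemma pf_qf (k j : ℕ) (hj : j ≤ 2 * k) : pf k j + qf k j + j = 3 * k := by
  unfold pf qf; split_ifs <;> omega

lemma gauss (k : ℕ) : ∑ j ∈ Finset.range (2 * k + 1), j = k * (2 * k + 1) := by
  refine Nat.eq_of_mul_eq_mul_right (show 0 < 2 by norm_num) ?_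
  rw [Finset.sum_range_id_mul_two, Nat.add_sub_cancel]
  ring

lemma sum_pf (k : ℕ) :
    ∑ j ∈ Finset.range (2 * k + 1), pf k j = k * (2 * k + 1) := by
  rw [← gauss k]
  refine Finset.sum_nbij' (i := fun j => pf k j) (j := fun v => pinv k v)
    ?_ ?_ ?_ ?_ ?_
  · intro a ha
    simp only [Finset.mem_range] at *
    have := pf_le k a; omega
  · intro a ha
    simp only [Finset.mem_range] at *
    simp only [pinv]; split_ifs <;> omega
  · intro a ha
    simp only [Finset.mem_range] at ha
    simp only [pf, pinv]; split_ifs <;> omega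
  · intro a ha
    simp only [Finset.mem_range] at ha
    simp only [pf, pinv]; split_ifs <;> omega
  · intro a _; rfl

lemma sum_qf (k : ℕ) :
    ∑ j ∈ Finset.range (2 * k + 1), qf k j = k * (2 * k + 1) := by
  rw [← gauss k]
  refine Finset.sum_nbij' (i := fun j => qf k j) (j := fun v => qinv k v)
    ?_ ?_ ?_ ?_ ?_
  · intro a ha
    simp only [Finset.mem_range] at *
    have := qf_le k a; omega
  · intro a ha
    simp only [Finset.mem_range] at *
    simp only [qinv]; split_ifs <;> omega
  · intro a ha
    simp only [Finset.mem_range] at ha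
    simp only [qf, qinv]; split_ifs <;> omega
  · intro a ha
    simp only [Finset.mem_range] at ha
    simp only [qf, qinv]; split_ifs <;> omega
  · intro a _; rfl

theorem matrix11_exists (k : ℕ) (hk : 1 ≤ k) :
    ∃ A : Fin 11 → Fin (2 * k + 1) → ℕ,
      Set.BijOn (fun q : Fin 11 × Fin (2 * k + 1) => A q.1 q.2) Set.univ
        (Set.Icc 1 (22 * k + 11)) ∧
      (∀ j, A 0 j + A 1 j + A 2 j + A 3 j + A 4 j = 25 * k + 15) ∧
      (∀ j, A 0 j + A 5 j + A 6 j + A 7 j = 50 * k + 27 ∧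
            A 1 j + A 8 j + A 9 j + A 10 j = 50 * k + 27) ∧
      (∀ a : Fin 3, ∑ j : Fin (2 * k + 1),
          (A ⟨2 + a.1, by have := a.isLt; omega⟩ j +
           A ⟨5 + a.1, by have := a.isLt; omega⟩ j +
           A ⟨8 + a.1, by have := a.isLt; omega⟩ j) = (2 * k + 1) * (39 * k + 21)) := by
  refine ⟨fun i j => M k i.1 j.1, ?_, ?_, ?_, ?_⟩
  · -- bijection
    have hmaps : Set.MapsTo (fun q : Fin 11 × Fin (2 * k + 1) => M k q.1.1 q.2.1)
        Set.univ (Set.Icc 1 (22 * k + 11)) := by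
      rintro ⟨i, j⟩ -
      simp only [Set.mem_Icc]
      have hj := j.isLt
      have hp := pf_le k j.1
      have hq := qf_le k j.1
      fin_cases i <;> simp only [M] <;> omega
    have hinj : Set.InjOn (fun q : Fin 11 × Fin (2 * k + 1) => M k q.1.1 q.2.1)
        Set.univ := by
      rintro ⟨i, j⟩ - ⟨i', j'⟩ - h
      simp only at h
      have hj : j.1 ≤ 2 * k := by have := j.isLt; omega
      have hj' : j'.1 ≤ 2 * k := by have := j'.isLt; omega
      have hp := pf_le k j.1
      have hp' := pf_le k j'.1
      have hq := qf_le k j.1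
      have hq' := qf_le k j'.1
      have hpi := @pf_inj k j.1 j'.1 hj hj'
      have hqi := @qf_inj k j.1 j'.1 hj hj'
      have hjeq : j.1 = j'.1 → j = j' := fun h => Fin.ext h
      fin_cases i <;> fin_cases i' <;>
        simp only [M, Prod.mk.injEq, Fin.mk.injEq] at h ⊢ <;>
        first
          | exact ⟨trivial, hjeq (by omega)⟩
          | exact ⟨trivial, hjeq (hpi (by omega))⟩
          | exact ⟨trivial, hjeq (hqi (by omega))⟩
          | omega
    refine ⟨hmaps, hinj, ?_⟩
    have himg : (fun q : Fin 11 × Fin (2 * k + 1) => M k q.1.1 q.2.1) '' Set.univ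
        = Set.Icc 1 (22 * k + 11) := by
      apply Set.eq_of_subset_of_ncard_le (hmaps.image_subset)
      rw [Set.ncard_image_of_injOn hinj, Set.ncard_univ, ← Finset.coe_Icc,
        Set.ncard_coe_finset, Nat.card_Icc]
      simp [Nat.card_eq_fintype_card]
      ring_nf
      omega
    rw [Set.SurjOn, himg]
  · -- column sums on rows 0-4
    intro j
    have hj : j.1 ≤ 2 * k := by have := j.isLt; omega
    have hpq := pf_qf k j.1 hj
    simp [M]
    omega
  · -- rows 0,5,6,7 and 1,8,9,10
    intro j
    have hj : j.1 ≤ 2 * k := by have := j.isLt; omega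
    constructor <;> (simp [M]; omega)
  · -- total sums of rows 2+a, 5+a, 8+a
    intro a
    fin_cases a
    · have : ∀ m ∈ Finset.range (2 * k + 1),
          M k 2 m + M k 5 m + M k 8 m = (38 * k + 21) + m := by
        intro m hm
        simp only [Finset.mem_range] at hm
        simp only [M]; omega
      calc ∑ j : Fin (2 * k + 1), (M k 2 j.1 + M k 5 j.1 + M k 8 j.1)
          = ∑ m ∈ Finset.range (2 * k + 1), (M k 2 m + M k 5 m + M k 8 m) :=
            Fin.sum_univ_eq_sum_range (fun m => M k 2 m + M k 5 m + M k 8 m) (2 * k + 1)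
        _ = ∑ m ∈ Finset.range (2 * k + 1), ((38 * k + 21) + m) :=
            Finset.sum_congr rfl this
        _ = (2 * k + 1) * (38 * k + 21) + k * (2 * k + 1) := by
            rw [Finset.sum_add_distrib, Finset.sum_const, Finset.card_range,
              gauss, smul_eq_mul]
        _ = (2 * k + 1) * (39 * k + 21) := by ring
    · have : ∀ m ∈ Finset.range (2 * k + 1),
          M k 3 m + M k 6 m + M k 9 m = (38 * k + 21) + pf k m := by
        intro m hm
        simp only [Finset.mem_range] at hm
        simp only [M]; omega
      calc ∑ j : Fin (2 * k + 1), (M k 3 j.1 + M k 6 j.1 + M k 9 j.1)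
          = ∑ m ∈ Finset.range (2 * k + 1), (M k 3 m + M k 6 m + M k 9 m) :=
            Fin.sum_univ_eq_sum_range (fun m => M k 3 m + M k 6 m + M k 9 m) (2 * k + 1)
        _ = ∑ m ∈ Finset.range (2 * k + 1), ((38 * k + 21) + pf k m) :=
            Finset.sum_congr rfl this
        _ = (2 * k + 1) * (38 * k + 21) + k * (2 * k + 1) := by
            rw [Finset.sum_add_distrib, Finset.sum_const, Finset.card_range,
              sum_pf, smul_eq_mul]
        _ = (2 * k + 1) * (39 * k + 21) := by ring
    · have : ∀ m ∈ Finset.range (2 * k + 1),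
          M k 4 m + M k 7 m + M k 10 m = (38 * k + 21) + qf k m := by
        intro m hm
        simp only [Finset.mem_range] at hm
        simp only [M]; omega
      calc ∑ j : Fin (2 * k + 1), (M k 4 j.1 + M k 7 j.1 + M k 10 j.1)
          = ∑ m ∈ Finset.range (2 * k + 1), (M k 4 m + M k 7 m + M k 10 m) :=
            Fin.sum_univ_eq_sum_range (fun m => M k 4 m + M k 7 m + M k 10 m) (2 * k + 1)
        _ = ∑ m ∈ Finset.range (2 * k + 1), ((38 * k + 21) + qf k m) :=
            Finset.sum_congr rfl this
        _ = (2 * k + 1) * (38 * k + 21) + k * (2 * k + 1) := by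
            rw [Finset.sum_add_distrib, Finset.sum_const, Finset.card_range,
              sum_qf, smul_eq_mul]
        _ = (2 * k + 1) * (39 * k + 21) := by ring
  
end LocalAntimagic
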